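/- For every ℓ ≥ 1 and n ≥ 1, g_ℓ(n) = ∑_{d | n} d · g_{ℓ-1}(d), where g_0(1) = 1 and g_0(n) = 0 for n > 1. -/

import Mathlib

/-- Number of subgroups of `ℤ^ℓ` of index `n`. -/
noncomputable def g (ℓ n : ℕ) : ℕ := Nat.card {H : AddSubgroup (Fin ℓ → ℤ) // H.index = n}

/-- `N ℓ n = |Hom(ℤ^ℓ, S_n)| / n!`, the number of ℓ-tuples of pairwise
commuting permutations of `n` letters, divided by `n!`. -/
noncomputable def N (ℓ n : ℕ) : ℚ :=
  (Nat.card {π : Fin ℓ → Equiv.Perm (Fin n) // ∀ i j, Commute (π i) (π j)} : ℚ) / n.factorial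

open AddSubgroup

section Aux

lemma GRec.index_prod {A : Type*} [AddCommGroup A] (H : AddSubgroup (ℤ × A)) :
    H.index = (H.comap (AddMonoidHom.inr ℤ A)).index * (H.map (AddMonoidHom.fst ℤ A)).index := by
  set f := AddMonoidHom.fst ℤ A with hf
  set K := f.ker with hK
  have h1 : H.relIndex (H ⊔ K) * (H ⊔ K).index = H.index :=
    relIndex_mul_index le_sup_left
  have h2 : (H ⊔ K).index = (H.map f).index := by
    rw [← AddSubgroup.comap_map_eq f H]
    exact AddSubgroup.index_comap_of_surjective _ Prod.fst_surjective
  have h3 : H.relIndex (H ⊔ K) = H.relIndex K := relIndex_sup_left K H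
  have hmem : ∀ a : A, (AddMonoidHom.inr ℤ A) a ∈ K := fun a => AddMonoidHom.mem_ker.mpr rfl
  let e : A →+ K := (AddMonoidHom.inr ℤ A).codRestrict K hmem
  have he : Function.Surjective e := by
    rintro ⟨⟨x, a⟩, hx⟩
    refine ⟨a, ?_⟩
    have hx0 : x = 0 := AddMonoidHom.mem_ker.mp hx
    subst hx0
    rfl
  have h4 : H.relIndex K = (H.comap (AddMonoidHom.inr ℤ A)).index := by
    rw [AddSubgroup.relIndex, ← AddSubgroup.index_comap_of_surjective _ he]
    congr 1
  rw [← h1, h2, h3, h4]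

lemma GRec.int_subgroup_eq_zmultiples_index (J : AddSubgroup ℤ) :
    J = zmultiples ((J.index : ℤ)) := by
  obtain ⟨gen, hg⟩ := Int.subgroup_cyclic J
  rw [← zmultiples_eq_closure] at hg
  subst hg
  rw [Int.index_zmultiples]
  rcases Int.natAbs_eq gen with h | h
  · rw [← h]
  · rw [← neg_neg ((gen.natAbs : ℤ)), ← h]
    ext x
    simp only [mem_zmultiples_iff]
    exact ⟨fun ⟨k, hk⟩ => ⟨-k, by rw [← hk]; simp⟩, fun ⟨k, hk⟩ => ⟨-k, by rw [← hk]; simp⟩⟩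

variable {A : Type*} [AddCommGroup A]

/-- subgroup of `ℤ × A` built from an index `a`, a subgroup `H'` of `A` and a coset `v`. -/
def GRec.mkH (a : ℕ) (H' : AddSubgroup A) (v : A ⧸ H') : AddSubgroup (ℤ × A) where
  carrier := {p | ∃ t : ℤ, p.1 = t * a ∧ (p.2 : A ⧸ H') = t • v}
  zero_mem' := ⟨0, by simp⟩
  add_mem' := by
    rintro p q ⟨t, ht1, ht2⟩ ⟨s, hs1, hs2⟩
    exact ⟨t + s, by rw [Prod.fst_add, ht1, hs1]; ring,
      by rw [Prod.snd_add, QuotientAddGroup.mk_add, ht2, hs2, add_zsmul]⟩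
  neg_mem' := by
    rintro p ⟨t, ht1, ht2⟩
    exact ⟨-t, by rw [Prod.fst_neg, ht1]; ring,
      by rw [Prod.snd_neg, QuotientAddGroup.mk_neg, ht2, neg_zsmul]⟩

namespace GRec

lemma mem_mkH {a : ℕ} {H' : AddSubgroup A} {v : A ⧸ H'} {p : ℤ × A} :
    p ∈ mkH a H' v ↔ ∃ t : ℤ, p.1 = t * a ∧ (p.2 : A ⧸ H') = t • v := Iff.rfl

lemma mkH_comap_inr {a : ℕ} (ha : a ≠ 0) (H' : AddSubgroup A) (v : A ⧸ H') :
    (mkH a H' v).comap (AddMonoidHom.inr ℤ A) = H' := by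
  ext m
  simp only [AddSubgroup.mem_comap, AddMonoidHom.inr_apply, mem_mkH]
  constructor
  · rintro ⟨t, ht1, ht2⟩
    have ht : t = 0 := by
      have h : (a : ℤ) ≠ 0 := Int.natCast_ne_zero.mpr ha
      rcases mul_eq_zero.mp ht1.symm with h1 | h2
      · exact h1
      · exact absurd h2 h
    subst ht
    simpa [QuotientAddGroup.eq_zero_iff] using ht2
  · intro hm
    exact ⟨0, by simp, by simp [(QuotientAddGroup.eq_zero_iff m).mpr hm]⟩

lemma mkH_map_fst (a : ℕ) (H' : AddSubgroup A) (v : A ⧸ H') :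
    (mkH a H' v).map (AddMonoidHom.fst ℤ A) = zmultiples (a : ℤ) := by
  ext x
  simp only [AddSubgroup.mem_map, mem_zmultiples_iff]
  constructor
  · rintro ⟨p, ⟨t, ht1, _⟩, rfl⟩
    refine ⟨t, ?_⟩
    rw [zsmul_eq_mul]
    exact ht1.symm
  · rintro ⟨t, rfl⟩
    obtain ⟨w, hw⟩ := QuotientAddGroup.mk_surjective (t • v)
    exact ⟨(t * a, w), ⟨t, rfl, hw⟩, by rw [zsmul_eq_mul]; rfl⟩

lemma mkH_index {a : ℕ} (ha : a ≠ 0) (H' : AddSubgroup A) (v : A ⧸ H') :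
    (mkH a H' v).index = H'.index * a := by
  rw [GRec.index_prod, mkH_comap_inr ha, mkH_map_fst, Int.index_zmultiples, Int.natAbs_natCast]

lemma mkH_mem_iff {a : ℕ} (ha : a ≠ 0) (H' : AddSubgroup A) (v : A ⧸ H') (w : A) :
    ((a : ℤ), w) ∈ mkH a H' v ↔ (w : A ⧸ H') = v := by
  rw [mem_mkH]
  constructor
  · rintro ⟨t, ht1, ht2⟩
    have h : (a : ℤ) ≠ 0 := Int.natCast_ne_zero.mpr ha
    have h1 : (1 : ℤ) * a = t * a := by rw [one_mul]; exact ht1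
    have ht : t = 1 := (mul_right_cancel₀ h h1.symm)
    subst ht
    simpa using ht2
  · intro h
    exact ⟨1, by simp, by simp [h]⟩

lemma eq_mkH (H : AddSubgroup (ℤ × A)) :
    ∃ w : A, H = mkH ((H.map (AddMonoidHom.fst ℤ A)).index)
      (H.comap (AddMonoidHom.inr ℤ A)) (w : A ⧸ (H.comap (AddMonoidHom.inr ℤ A))) := by
  set J := H.map (AddMonoidHom.fst ℤ A) with hJ
  set a := J.index with haa
  set H' := H.comap (AddMonoidHom.inr ℤ A) with hH'
  have hJz : J = zmultiples ((a : ℤ)) := GRec.int_subgroup_eq_zmultiples_index J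
  have haJ : ((a : ℤ)) ∈ J := by rw [hJz]; exact mem_zmultiples _
  obtain ⟨p, hp, hpa⟩ := haJ
  have hpa' : p.1 = (a : ℤ) := hpa
  refine ⟨p.2, ?_⟩
  ext q
  rw [mem_mkH]
  constructor
  · intro hq
    have hq1 : q.1 ∈ J := ⟨q, hq, rfl⟩
    rw [hJz, mem_zmultiples_iff] at hq1
    obtain ⟨t, ht⟩ := hq1
    rw [zsmul_eq_mul] at ht
    refine ⟨t, ht.symm, ?_⟩
    have hsub : q - t • p ∈ H := sub_mem hq (zsmul_mem hp t)
    have hfst : (q - t • p).1 = 0 := by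
      have h5 : (t • p).1 = t * p.1 := rfl
      simp [Prod.fst_sub, h5, hpa', ← ht]
    have heq : q - t • p = (AddMonoidHom.inr ℤ A) (q.2 - t • p.2) :=
      Prod.ext (by rw [hfst]; rfl) rfl
    have h2 : q.2 - t • p.2 ∈ H' := AddSubgroup.mem_comap.mpr (heq ▸ hsub)
    have := (QuotientAddGroup.eq_iff_sub_mem).mpr h2
    rw [this, QuotientAddGroup.mk_zsmul]
  · rintro ⟨t, ht1, ht2⟩
    rw [← QuotientAddGroup.mk_zsmul, QuotientAddGroup.eq_iff_sub_mem] at ht2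
    have hin : (AddMonoidHom.inr ℤ A) (q.2 - t • p.2) ∈ H := ht2
    have hq : q = t • p + (AddMonoidHom.inr ℤ A) (q.2 - t • p.2) := by
      refine Prod.ext ?_ ?_
      · show q.1 = t * p.1 + 0
        rw [hpa', add_zero]; exact ht1
      · show q.2 = t • p.2 + (q.2 - t • p.2)
        abel
    rw [hq]
    exact add_mem (zsmul_mem hp t) hin

lemma finite_subgroups (k : ℕ) {d : ℕ} (hd : d ≠ 0) :
    Finite {H : AddSubgroup (Fin k → ℤ) // H.index = d} := by
  haveI : NeZero d := ⟨hd⟩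
  let φ : (Fin k → ℤ) →+ (Fin k → ZMod d) :=
    AddMonoidHom.mk' (fun m i => (m i : ZMod d)) (by
      intro x y; funext i; simp [Pi.add_apply])
  have key : ∀ H : AddSubgroup (Fin k → ℤ), H.index = d → φ.ker ≤ H := by
    intro H hH m hm
    have hm' : φ m = 0 := hm
    have h : ∀ i, (d : ℤ) ∣ m i := fun i => by
      have := congrFun hm' i
      exact (ZMod.intCast_zmod_eq_zero_iff_dvd _ d).mp this
    have hmd : m = d • fun i => m i / d := by
      funext i
      rw [Pi.smul_apply, nsmul_eq_mul]
      exact (Int.mul_ediv_cancel' (h i)).symm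
    rw [hmd, ← hH]
    exact H.nsmul_index_mem _
  have hfin : Finite (AddSubgroup (Fin k → ZMod d)) :=
    Finite.of_injective _ (SetLike.coe_injective (A := AddSubgroup (Fin k → ZMod d)))
  refine Finite.of_injective (fun H => (H.1.map φ : AddSubgroup (Fin k → ZMod d))) ?_
  intro H1 H2 hmap
  have h1 : (H1.1.map φ).comap φ = H1.1 := by
    rw [AddSubgroup.comap_map_eq]
    exact sup_eq_left.mpr (key H1.1 H1.2)
  have h2 : (H2.1.map φ).comap φ = H2.1 := by
    rw [AddSubgroup.comap_map_eq]
    exact sup_eq_left.mpr (key H2.1 H2.2)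
  ext1
  simp only at hmap
  rw [← h1, ← h2, hmap]

/-- transfer of subgroup counting along an `AddEquiv`. -/
lemma card_subgroups_congr {G G' : Type*} [AddGroup G] [AddGroup G'] (e : G ≃+ G') (n : ℕ) :
    Nat.card {H : AddSubgroup G // H.index = n} =
      Nat.card {H : AddSubgroup G' // H.index = n} := by
  apply Nat.card_congr
  refine
    { toFun := fun H => ⟨H.1.comap e.symm.toAddMonoidHom, by
        rw [AddSubgroup.index_comap_of_surjective _ e.symm.surjective]; exact H.2⟩
      invFun := fun H => ⟨H.1.comap e.toAddMonoidHom, by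
        rw [AddSubgroup.index_comap_of_surjective _ e.surjective]; exact H.2⟩
      left_inv := ?_
      right_inv := ?_ }
  · intro H
    ext1
    ext x
    simp [AddSubgroup.mem_comap]
  · intro H
    ext1
    ext x
    simp [AddSubgroup.mem_comap]

/-- the additive equivalence `ℤ^{k+1} ≃+ ℤ × ℤ^k`. -/
def prodAddEquiv (k : ℕ) : (Fin (k + 1) → ℤ) ≃+ ℤ × (Fin k → ℤ) :=
  { (Fin.consEquiv fun _ : Fin (k + 1) => ℤ).symm with map_add' := fun _ _ => rfl }

end GRec

end Aux

theorem g_recursion (ℓ n : ℕ) (hℓ : 1 ≤ ℓ) (hn : 1 ≤ n) :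
    g ℓ n = ∑ d ∈ n.divisors, d * g (ℓ - 1) d := by
  obtain ⟨k, rfl⟩ : ∃ k, ℓ = k + 1 := ⟨ℓ - 1, (Nat.succ_pred_eq_of_pos hℓ).symm⟩
  simp only [Nat.add_sub_cancel]
  have hn0 : n ≠ 0 := by omega
  set A := (Fin k → ℤ)
  -- step 1 : transfer to ℤ × A
  have step1 : g (k + 1) n = Nat.card {H : AddSubgroup (ℤ × A) // H.index = n} :=
    GRec.card_subgroups_congr (GRec.prodAddEquiv k) n
  -- the sigma type
  let S := Σ d : n.divisors, Σ H' : {H' : AddSubgroup A // H'.index = (d : ℕ)}, A ⧸ H'.1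
  -- the bijection
  let F : S → {H : AddSubgroup (ℤ × A) // H.index = n} := fun x =>
    ⟨GRec.mkH (n / (x.1 : ℕ)) x.2.1.1 x.2.2, by
      have hd : (x.1 : ℕ) ∣ n := (Nat.mem_divisors.mp x.1.2).1
      have hdne : (x.1 : ℕ) ≠ 0 := (Nat.pos_of_mem_divisors x.1.2).ne'
      have hane : n / (x.1 : ℕ) ≠ 0 := by
        have := Nat.div_pos (Nat.le_of_dvd (by omega) hd) (Nat.pos_of_mem_divisors x.1.2)
        omega
      rw [GRec.mkH_index hane, x.2.1.2, Nat.mul_div_cancel' hd]⟩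
  have hFbij : Function.Bijective F := by
    constructor
    · rintro ⟨d1, H1, v1⟩ ⟨d2, H2, v2⟩ hFeq
      have hEq : GRec.mkH (n / (d1 : ℕ)) H1.1 v1 = GRec.mkH (n / (d2 : ℕ)) H2.1 v2 :=
        congrArg Subtype.val hFeq
      have hd1 : (d1 : ℕ) ≠ 0 := (Nat.pos_of_mem_divisors d1.2).ne'
      have hd2 : (d2 : ℕ) ≠ 0 := (Nat.pos_of_mem_divisors d2.2).ne'
      have ha1 : n / (d1 : ℕ) ≠ 0 := by
        have := Nat.div_pos (Nat.le_of_dvd (by omega) (Nat.mem_divisors.mp d1.2).1)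
          (Nat.pos_of_mem_divisors d1.2); omega
      have ha2 : n / (d2 : ℕ) ≠ 0 := by
        have := Nat.div_pos (Nat.le_of_dvd (by omega) (Nat.mem_divisors.mp d2.2).1)
          (Nat.pos_of_mem_divisors d2.2); omega
      have hHeq : H1.1 = H2.1 := by
        rw [← GRec.mkH_comap_inr ha1 H1.1 v1, ← GRec.mkH_comap_inr ha2 H2.1 v2, hEq]
      have hdeq : d1 = d2 := by
        apply Subtype.ext
        rw [← H1.2, ← H2.2, hHeq]
      subst hdeq
      have hH12 : H1 = H2 := Subtype.ext hHeq
      subst hH12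
      have hveq : v1 = v2 := by
        obtain ⟨w, hw⟩ := QuotientAddGroup.mk_surjective v1
        have h1 : (((n / (d1 : ℕ) : ℕ) : ℤ), w) ∈ GRec.mkH (n / (d1 : ℕ)) H1.1 v1 :=
          (GRec.mkH_mem_iff ha1 H1.1 v1 w).mpr hw
        rw [hEq] at h1
        have h2 := (GRec.mkH_mem_iff ha1 H1.1 v2 w).mp h1
        rw [← hw, h2]
      subst hveq
      rfl
    · rintro ⟨H, hind⟩
      obtain ⟨w, hw⟩ := GRec.eq_mkH H
      set a := (H.map (AddMonoidHom.fst ℤ (Fin k → ℤ))).index with haeq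
      set H' := H.comap (AddMonoidHom.inr ℤ (Fin k → ℤ)) with hH'eq
      have hidx : n = H'.index * a := by rw [← hind]; exact GRec.index_prod H
      have hd0 : H'.index ≠ 0 := by intro h; rw [h, zero_mul] at hidx; exact hn0 hidx
      have ha0 : a ≠ 0 := by intro h; rw [h, mul_zero] at hidx; exact hn0 hidx
      have hdvd : H'.index ∣ n := ⟨a, hidx⟩
      have hmem : H'.index ∈ n.divisors := Nat.mem_divisors.mpr ⟨hdvd, hn0⟩
      have hna : n / H'.index = a := by rw [hidx, Nat.mul_div_cancel_left _ (Nat.pos_of_ne_zero hd0)]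
      refine ⟨⟨⟨H'.index, hmem⟩, ⟨H', rfl⟩, (w : A ⧸ H')⟩, ?_⟩
      apply Subtype.ext
      show GRec.mkH (n / H'.index) H' (w : A ⧸ H') = H
      rw [hna, hw]
  have step2 : Nat.card {H : AddSubgroup (ℤ × A) // H.index = n} = Nat.card S :=
    (Nat.card_congr (Equiv.ofBijective F hFbij)).symm
  -- step 3 : count the sigma type
  haveI hfd : ∀ d : n.divisors, Finite {H' : AddSubgroup A // H'.index = (d : ℕ)} := fun d =>
    GRec.finite_subgroups k (Nat.pos_of_mem_divisors d.2).ne'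
  haveI hfq : ∀ (d : n.divisors) (H' : {H' : AddSubgroup A // H'.index = (d : ℕ)}),
      Finite (A ⧸ H'.1) := by
    intro d H'
    apply Nat.finite_of_card_ne_zero
    rw [← AddSubgroup.index_eq_card, H'.2]
    exact (Nat.pos_of_mem_divisors d.2).ne'
  letI : ∀ d : n.divisors, Fintype {H' : AddSubgroup A // H'.index = (d : ℕ)} := fun d =>
    Fintype.ofFinite _
  letI : ∀ (d : n.divisors) (H' : {H' : AddSubgroup A // H'.index = (d : ℕ)}),
      Fintype (A ⧸ H'.1) := fun d H' => Fintype.ofFinite _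
  have step3 : Nat.card S = ∑ d ∈ n.divisors, d * g k d := by
    rw [Nat.card_eq_fintype_card, Fintype.card_sigma]
    rw [← Finset.sum_coe_sort n.divisors (fun d => d * g k d)]
    apply Finset.sum_congr rfl
    intro d _
    rw [Fintype.card_sigma]
    have hcard : ∀ H' : {H' : AddSubgroup A // H'.index = (d : ℕ)},
        Fintype.card (A ⧸ H'.1) = (d : ℕ) := by
      intro H'
      rw [← Nat.card_eq_fintype_card, ← AddSubgroup.index_eq_card, H'.2]
    simp only [hcard, Finset.sum_const, smul_eq_mul]
    rw [g, Nat.card_eq_fintype_card]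
    rw [Fintype.card, mul_comm]
  rw [step1, step2, step3]
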